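/- For the instrumental variable model on three vertices with directed edges 1 → 2 and 2 → 3 and bidirected edge 2 ↔ 3: if Σ = (I − Λ)^{−T} Ω (I − Λ)^{−1} with Λ supported on the directed edges, Ω supported on the diagonal and the bidirected edge, Σ positive definite, and λ_{12} ≠ 0, then λ_{12} = σ_{12}/σ_{11} and λ_{23} = σ_{13}/σ_{12}. -/

import Mathlib

open Matrix

/-- Instrumental variable model (edges 1→2, 2→3, 2↔3): if `λ₁₂ ≠ 0` then the
regression coefficients are recovered as `λ₁₂ = σ₁₂/σ₁₁`, `λ₂₃ = σ₁₃/σ₁₂`. -/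
theorem stmt_4 (l12 l23 : ℝ) (Ω : Matrix (Fin 3) (Fin 3) ℝ)
    (hΩpd : Ω.PosDef)
    (hΩ01 : Ω 0 1 = 0) (hΩ10 : Ω 1 0 = 0) (hΩ02 : Ω 0 2 = 0) (hΩ20 : Ω 2 0 = 0)
    (Λ : Matrix (Fin 3) (Fin 3) ℝ)
    (hΛ : Λ = !![0, l12, 0; 0, 0, l23; 0, 0, 0])
    (S : Matrix (Fin 3) (Fin 3) ℝ)
    (hS : S = ((1 - Λ)⁻¹)ᵀ * Ω * (1 - Λ)⁻¹)
    (hSpd : S.PosDef)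
    (hl : l12 ≠ 0) :
    l12 = S 0 1 / S 0 0 ∧ l23 = S 0 2 / S 0 1 := by
  have hB : (1 - Λ)⁻¹ = !![1, l12, l12*l23; 0, 1, l23; 0, 0, 1] := by
    apply inv_eq_right_inv
    subst hΛ
    rw [show (1 : Matrix (Fin 3) (Fin 3) ℝ) = !![1,0,0;0,1,0;0,0,1] from Matrix.one_fin_three]
    ext i j
    fin_cases i <;> fin_cases j <;>
      simp [Matrix.mul_apply, Fin.sum_univ_succ, Matrix.vecHead, Matrix.vecTail] <;> try ring
  have h00 : S 0 0 = Ω 0 0 := by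
    subst hS; rw [hB]
    simp [Matrix.mul_apply, Fin.sum_univ_succ]
  have h01 : S 0 1 = Ω 0 0 * l12 := by
    subst hS; rw [hB]
    simp [Matrix.mul_apply, Fin.sum_univ_succ, hΩ01, hΩ10]
  have h02 : S 0 2 = Ω 0 0 * (l12 * l23) := by
    subst hS; rw [hB]
    simp [Matrix.mul_apply, Fin.sum_univ_succ, hΩ01, hΩ10, hΩ02, hΩ20]
    try ring
  have hΩ00 : 0 < Ω 0 0 := by
    exact hΩpd.diag_pos
  constructor
  · rw [h01, h00]; field_simp
  · rw [h02, h01]; field_simp
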